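/- For every δ > 0, the function v(x) = (1 + δ/x) · ln(1 + x/δ) is strictly increasing on (0, ∞). -/

import Mathlib

/-- For every `δ > 0`, `v(x) = (1 + δ/x) ln(1 + x/δ)` is strictly
increasing on `(0, ∞)`. -/
theorem stmt_7 (δ : ℝ) (hδ : 0 < δ) :
    StrictMonoOn (fun x : ℝ => (1 + δ / x) * Real.log (1 + x / δ)) (Set.Ioi 0) := by
  have key : ∀ x : ℝ, 0 < x →
      HasDerivAt (fun x : ℝ => (1 + δ / x) * Real.log (1 + x / δ))
        ((x - δ * Real.log (1 + x / δ)) / x ^ 2) x := by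
    intro x hx
    have hxne : x ≠ 0 := ne_of_gt hx
    have hδne : δ ≠ 0 := ne_of_gt hδ
    have hpos : (0:ℝ) < 1 + x / δ := by positivity
    have h1 : HasDerivAt (fun x : ℝ => 1 + δ / x) (-δ / x ^ 2) x := by
      have h := (hasDerivAt_const x (1:ℝ)).add ((hasDerivAt_inv hxne).const_mul δ)
      simpa [div_eq_mul_inv, mul_neg, neg_div, Pi.add_def] using h
    have h2 : HasDerivAt (fun x : ℝ => 1 + x / δ) (1 / δ) x := by
      simpa [Pi.add_def] using (hasDerivAt_const x (1:ℝ)).add ((hasDerivAt_id x).div_const δ)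
    have h3 : HasDerivAt (fun x : ℝ => Real.log (1 + x / δ)) ((1 / δ) / (1 + x / δ)) x :=
      h2.log (ne_of_gt hpos)
    have := h1.mul h3
    refine this.congr_deriv ?_
    have hpne : 1 + x / δ ≠ 0 := ne_of_gt hpos
    field_simp
    ring
  apply strictMonoOn_of_hasDerivWithinAt_pos (convex_Ioi (0:ℝ))
  · exact continuousOn_of_forall_continuousAt fun x hx => ((key x hx).continuousAt)
  · intro x hx
    rw [interior_Ioi] at hx
    exact ((key x hx).hasDerivWithinAt)
  · intro x hx
    rw [interior_Ioi] at hx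
    have hx : (0:ℝ) < x := hx
    have hlog : Real.log (1 + x / δ) < x / δ := by
      have hq : 0 < x / δ := by positivity
      have := Real.log_lt_sub_one_of_pos (by positivity : (0:ℝ) < 1 + x / δ) (by linarith)
      linarith
    have : δ * Real.log (1 + x / δ) < x := by
      have := mul_lt_mul_of_pos_left hlog hδ
      rwa [mul_div_cancel₀ x (ne_of_gt hδ)] at this
    exact div_pos (by linarith) (by positivity)
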